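/- arXiv:1704.00127 — 3 statements merged into one kernel-verified Lean document; each statement's English description precedes it below -/
import Mathlib

section
/- Let φ : X → Y be a measurable mapping between σ-finite measure spaces, 1 < p, r < ∞ and 1 ≤ s ≤ q ≤ ∞, and suppose f ∘ φ ∈ L_{p,q}(X) for all f ∈ L_{r,s}(Y). If K < ∞ is a constant such that ‖f ∘ φ‖_{p,q} ≤ K‖f‖_{r,s} for every f ∈ L_{r,s}(Y), then (μ(φ⁻¹(B)))^{1/p} ≤ K (ν(B))^{1/r} for every measurable set B ∈ 𝓑. -/
open MeasureTheory Set ENNReal NNReal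

/-- Distribution function `μ{x : |f(x)| > λ}` of a complex-valued function. -/
noncomputable def distribFn {X : Type*} [MeasurableSpace X] (μ : Measure X)
    (f : X → ℂ) (lam : ℝ) : ℝ≥0∞ :=
  μ {x | lam < ‖f x‖}

/-- The Lorentz `(p,q)`-norm, `1 < p < ∞`, `1 ≤ q ≤ ∞`, computed via the
distribution function. -/
noncomputable def lorentzNorm {X : Type*} [MeasurableSpace X] (μ : Measure X)
    (p : ℝ) (q : ℝ≥0∞) (f : X → ℂ) : ℝ≥0∞ :=
  if q = ∞ then ⨆ lam ∈ Set.Ioi (0 : ℝ), ENNReal.ofReal lam * (distribFn μ f lam) ^ (1 / p)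
  else (q * ∫⁻ lam in Set.Ioi (0 : ℝ),
      (ENNReal.ofReal lam * (distribFn μ f lam) ^ (1 / p)) ^ q.toReal /
        ENNReal.ofReal lam) ^ (1 / q.toReal)

/-- Membership in the Lorentz space `L_{p,q}`. -/
def MemLorentz {X : Type*} [MeasurableSpace X] (μ : Measure X)
    (p : ℝ) (q : ℝ≥0∞) (f : X → ℂ) : Prop :=
  Measurable f ∧ lorentzNorm μ p q f < ∞

lemma distribFn_indicator {X : Type*} [MeasurableSpace X] (μ : Measure X) (A : Set X)
    {lam : ℝ} (h0 : 0 < lam) :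
    distribFn μ (A.indicator fun _ => (1:ℂ)) lam = if lam < 1 then μ A else 0 := by
  unfold distribFn
  split_ifs with h1
  · congr 1
    ext x
    by_cases hx : x ∈ A <;> simp [hx, h1, h0, h0.le]
  · rw [← measure_empty (μ := μ)]
    congr 1
    ext x
    by_cases hx : x ∈ A <;>
      simp [hx, h0.le, not_lt.2 h0.le, not_lt.2 (not_lt.1 h1)]

lemma iSup_ofReal_Ioo : (⨆ lam ∈ Set.Ioo (0:ℝ) 1, ENNReal.ofReal lam) = 1 := by
  apply le_antisymm
  · exact iSup₂_le fun lam hlam => by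
      simpa using ENNReal.ofReal_le_ofReal hlam.2.le
  · by_contra h
    push_neg at h
    set S := ⨆ lam ∈ Set.Ioo (0:ℝ) 1, ENNReal.ofReal lam with hS
    have hSt : S ≠ ∞ := h.ne_top
    have ht1 : S.toReal < 1 := by
      have := ENNReal.toReal_lt_toReal hSt (by norm_num : (1:ℝ≥0∞) ≠ ∞) |>.2 h
      simpa using this
    have ht0 : 0 ≤ S.toReal := ENNReal.toReal_nonneg
    set lam := (S.toReal + 1) / 2 with hlam
    have h1 : lam ∈ Set.Ioo (0:ℝ) 1 := ⟨by positivity, by linarith⟩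
    have h2 : ENNReal.ofReal lam ≤ S := le_iSup₂_of_le lam h1 le_rfl
    have h3 : S < ENNReal.ofReal lam := by
      rw [← ENNReal.ofReal_toReal hSt]
      exact ENNReal.ofReal_lt_ofReal_iff (by linarith) |>.2 (by linarith)
    exact absurd h2 (not_le.2 h3)

lemma lorentzNorm_indicator {X : Type*} [MeasurableSpace X] (μ : Measure X)
    {p : ℝ} (hp : 1 < p) {q : ℝ≥0∞} (hq : 1 ≤ q) (A : Set X) :
    lorentzNorm μ p q (A.indicator fun _ => (1:ℂ)) = (μ A) ^ (1 / p) := by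
  have hp0 : 0 < 1 / p := by positivity
  rcases eq_or_ne q ∞ with hqi | hqi
  · subst hqi
    rw [lorentzNorm, if_pos rfl]
    apply le_antisymm
    · apply iSup₂_le
      intro lam hlam
      rw [distribFn_indicator μ A hlam]
      split_ifs with h1
      · calc ENNReal.ofReal lam * μ A ^ (1/p) ≤ 1 * μ A ^ (1/p) := by
              gcongr
              simpa using ENNReal.ofReal_le_ofReal h1.le
          _ = μ A ^ (1/p) := one_mul _
      · rw [ENNReal.zero_rpow_of_pos hp0, mul_zero]
        exact zero_le
    · calc (μ A) ^ (1/p) = (⨆ lam ∈ Set.Ioo (0:ℝ) 1, ENNReal.ofReal lam) * μ A ^ (1/p) := by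
            rw [iSup_ofReal_Ioo, one_mul]
        _ = ⨆ lam ∈ Set.Ioo (0:ℝ) 1, ENNReal.ofReal lam * μ A ^ (1/p) := by
            rw [ENNReal.iSup_mul]
            congr 1
            ext lam
            rw [ENNReal.iSup_mul]
        _ ≤ ⨆ lam ∈ Set.Ioi (0:ℝ),
              ENNReal.ofReal lam * (distribFn μ (A.indicator fun _ => (1:ℂ)) lam) ^ (1/p) := by
            apply iSup₂_le
            intro lam hlam
            apply le_iSup₂_of_le lam hlam.1
            rw [distribFn_indicator μ A hlam.1, if_pos hlam.2]
  · rw [lorentzNorm, if_neg hqi]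
    set qr := q.toReal with hqr
    have hq0 : 0 < qr := ENNReal.toReal_pos (by intro h; rw [h] at hq; simp at hq) hqi
    have hq1 : 1 ≤ qr := by
      rw [hqr, ← ENNReal.toReal_one]
      exact ENNReal.toReal_mono hqi hq
    have hint : ∫⁻ lam in Set.Ioi (0:ℝ),
        (ENNReal.ofReal lam * (distribFn μ (A.indicator fun _ => (1:ℂ)) lam) ^ (1/p)) ^ qr /
          ENNReal.ofReal lam
        = ∫⁻ lam in Set.Ioi (0:ℝ),
          (Set.Ioo (0:ℝ) 1).indicator
            (fun lam => ENNReal.ofReal (lam ^ (qr - 1)) * μ A ^ (qr / p)) lam := by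
      apply setLIntegral_congr_fun measurableSet_Ioi
      intro lam hlam
      dsimp only
      rw [distribFn_indicator μ A hlam]
      by_cases h1 : lam < 1
      · have hlam' : (0:ℝ) < lam := hlam
        rw [if_pos h1, Set.indicator_of_mem (Set.mem_Ioo.2 ⟨hlam', h1⟩)]
        have hne : ENNReal.ofReal lam ≠ 0 := by simpa using hlam'
        have hnt : ENNReal.ofReal lam ≠ ∞ := ENNReal.ofReal_ne_top
        rw [ENNReal.mul_rpow_of_nonneg _ _ hq0.le, ← ENNReal.rpow_mul,
          show 1 / p * qr = qr / p by ring]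
        have hsplit : ENNReal.ofReal lam ^ qr
            = ENNReal.ofReal lam ^ (qr - 1) * ENNReal.ofReal lam := by
          calc ENNReal.ofReal lam ^ qr = ENNReal.ofReal lam ^ (qr - 1 + 1) := by
                rw [sub_add_cancel]
            _ = ENNReal.ofReal lam ^ (qr - 1) * ENNReal.ofReal lam ^ (1:ℝ) :=
                ENNReal.rpow_add _ _ hne hnt
            _ = ENNReal.ofReal lam ^ (qr - 1) * ENNReal.ofReal lam := by
                rw [ENNReal.rpow_one]
        rw [hsplit, mul_right_comm, mul_div_assoc, ENNReal.div_self hne hnt, mul_one,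
          ENNReal.ofReal_rpow_of_pos hlam']
      · have hlam' : (0:ℝ) < lam := hlam
        rw [if_neg h1, Set.indicator_of_notMem (fun h => h1 h.2),
          ENNReal.zero_rpow_of_pos hp0, mul_zero, ENNReal.zero_rpow_of_pos hq0,
          ENNReal.zero_div]
    rw [hint, lintegral_indicator measurableSet_Ioo,
      Measure.restrict_restrict measurableSet_Ioo,
      Set.inter_eq_self_of_subset_left Set.Ioo_subset_Ioi_self,
      lintegral_mul_const _ (by fun_prop) ]
    have hI : ∫⁻ lam in Set.Ioo (0:ℝ) 1, ENNReal.ofReal (lam ^ (qr - 1))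
        = ENNReal.ofReal (1 / qr) := by
      have hinteg : IntegrableOn (fun lam : ℝ => lam ^ (qr - 1)) (Set.Ioo 0 1) := by
        have := intervalIntegral.intervalIntegrable_rpow' (a := 0) (b := 1)
          (show (-1:ℝ) < qr - 1 by linarith)
        rw [intervalIntegrable_iff_integrableOn_Ioc_of_le zero_le_one] at this
        exact this.mono_set Set.Ioo_subset_Ioc_self
      rw [← ofReal_integral_eq_lintegral_ofReal hinteg ?nn]
      case nn =>
        filter_upwards [ae_restrict_mem measurableSet_Ioo] with lam h
        exact Real.rpow_nonneg h.1.le _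
      congr 1
      rw [← integral_Ioc_eq_integral_Ioo, ← intervalIntegral.integral_of_le zero_le_one,
        integral_rpow (Or.inl (by linarith))]
      rw [sub_add_cancel, Real.one_rpow, Real.zero_rpow hq0.ne']
      ring
    rw [hI, ← mul_assoc, ← ENNReal.ofReal_toReal hqi, ← hqr, ← ENNReal.ofReal_mul hq0.le,
      mul_one_div_cancel hq0.ne', ENNReal.ofReal_one, one_mul, ← ENNReal.rpow_mul,
      show qr / p * (1 / qr) = 1 / p by field_simp]




/-- If `f ∘ φ ∈ L_{p,q}(X)` for all `f ∈ L_{r,s}(Y)` and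
`‖f ∘ φ‖_{p,q} ≤ K ‖f‖_{r,s}` for every `f ∈ L_{r,s}(Y)`, then
`(μ(φ⁻¹(B)))^{1/p} ≤ K (ν B)^{1/r}` for every measurable `B`. -/
theorem measure_preimage_le_of_compositionBound
    {X Y : Type*} [MeasurableSpace X] [MeasurableSpace Y]
    (μ : Measure X) (ν : Measure Y) [SigmaFinite μ] [SigmaFinite ν]
    (φ : X → Y) (hφ : Measurable φ)
    (p r : ℝ) (hp : 1 < p) (hr : 1 < r)
    (s q : ℝ≥0∞) (hs : 1 ≤ s) (hsq : s ≤ q)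
    (hcomp : ∀ f : Y → ℂ, MemLorentz ν r s f → MemLorentz μ p q (f ∘ φ))
    (K : ℝ≥0)
    (hK : ∀ f : Y → ℂ, MemLorentz ν r s f →
      lorentzNorm μ p q (f ∘ φ) ≤ (K : ℝ≥0∞) * lorentzNorm ν r s f) :
    ∀ B : Set Y, MeasurableSet B →
      (μ (φ ⁻¹' B)) ^ (1 / p) ≤ (K : ℝ≥0∞) * (ν B) ^ (1 / r) := by
  have hp0 : (0:ℝ) < p := lt_trans one_pos hp
  have hr0 : (0:ℝ) < 1 / r := by positivity
  -- Step 1: the claim for sets of finite measure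
  have key : ∀ B' : Set Y, MeasurableSet B' → ν B' < ∞ →
      (μ (φ ⁻¹' B')) ^ (1 / p) ≤ (K : ℝ≥0∞) * (ν B') ^ (1 / r) := by
    intro B' hB' hν
    set f : Y → ℂ := B'.indicator (fun _ => (1:ℂ)) with hf
    have hnorm : lorentzNorm ν r s f = (ν B') ^ (1 / r) := lorentzNorm_indicator ν hr hs B'
    have hmem : MemLorentz ν r s f := by
      refine ⟨measurable_const.indicator hB', ?_⟩
      rw [hnorm]
      exact ENNReal.rpow_lt_top_of_nonneg hr0.le hν.ne
    have hcompf : f ∘ φ = (φ ⁻¹' B').indicator (fun _ => (1:ℂ)) := by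
      ext x
      by_cases hx : φ x ∈ B' <;> simp [hf, hx, Function.comp]
    have h1 := hK f hmem
    rwa [hnorm, hcompf, lorentzNorm_indicator μ hp (le_trans hs hsq)] at h1
  intro B hB
  -- Step 2: exhaust B by sets of finite measure
  suffices h : μ (φ ⁻¹' B) ≤ ((K : ℝ≥0∞) * (ν B) ^ (1 / r)) ^ p by
    calc (μ (φ ⁻¹' B)) ^ (1 / p)
        ≤ (((K : ℝ≥0∞) * (ν B) ^ (1 / r)) ^ p) ^ (1 / p) :=
          ENNReal.rpow_le_rpow h (by positivity)
      _ = (K : ℝ≥0∞) * (ν B) ^ (1 / r) := by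
          rw [← ENNReal.rpow_mul, mul_one_div_cancel hp0.ne', ENNReal.rpow_one]
  have hU : φ ⁻¹' B = ⋃ n, φ ⁻¹' (B ∩ spanningSets ν n) := by
    rw [← Set.preimage_iUnion, ← Set.inter_iUnion, iUnion_spanningSets, Set.inter_univ]
  have hdir : Monotone fun n => φ ⁻¹' (B ∩ spanningSets ν n) := fun m n hmn =>
    Set.preimage_mono (Set.inter_subset_inter_right _ (monotone_spanningSets ν hmn))
  rw [hU, hdir.directed_le.measure_iUnion]
  apply iSup_le
  intro n
  have h1 := key (B ∩ spanningSets ν n) (hB.inter (measurableSet_spanningSets ν n))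
    (lt_of_le_of_lt (measure_mono Set.inter_subset_right) (measure_spanningSets_lt_top ν n))
  have h2 : (K : ℝ≥0∞) * (ν (B ∩ spanningSets ν n)) ^ (1 / r)
      ≤ (K : ℝ≥0∞) * (ν B) ^ (1 / r) := by
    gcongr
    exact Set.inter_subset_left
  calc μ (φ ⁻¹' (B ∩ spanningSets ν n))
      = ((μ (φ ⁻¹' (B ∩ spanningSets ν n))) ^ (1 / p)) ^ p := by
        rw [← ENNReal.rpow_mul, one_div_mul_cancel hp0.ne', ENNReal.rpow_one]
    _ ≤ ((K : ℝ≥0∞) * (ν B) ^ (1 / r)) ^ p :=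
        ENNReal.rpow_le_rpow (h1.trans h2) hp0.le
end

section
/- Let φ : X → Y be a measurable mapping between σ-finite measure spaces satisfying the Luzin N⁻¹-property, and suppose there is a constant c > 0 with J_{φ⁻¹}(y) ≥ c for ν-a.e. y ∈ Y, and that for every ε > 0 there exists a measurable set B ∈ 𝓑 with 0 < ν(B) < ε. If φ induces a bounded composition operator C_φ : L_{r,s}(Y) → L_{p,q}(X) (with 1 < p, r < ∞, 1 ≤ s ≤ q ≤ ∞), then p ≤ r. -/
open MeasureTheory Set ENNReal NNReal

lemma distrib_ind_lt {X : Type*} [MeasurableSpace X] (μ : Measure X) (A : Set X)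
    {lam : ℝ} (h0 : 0 < lam) (h1 : lam < 1) :
    distribFn μ (A.indicator fun _ => (1:ℂ)) lam = μ A := by
  unfold distribFn
  congr 1
  ext x
  by_cases hx : x ∈ A <;> simp [hx, h0.not_gt, h1]

lemma distrib_ind_ge {X : Type*} [MeasurableSpace X] (μ : Measure X) (A : Set X)
    {lam : ℝ} (h1 : (1:ℝ) ≤ lam) :
    distribFn μ (A.indicator fun _ => (1:ℂ)) lam = 0 := by
  unfold distribFn
  convert measure_empty
  · ext x
    by_cases hx : x ∈ A <;> simp [hx, h1.not_gt, (lt_of_lt_of_le one_pos h1).not_gt]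
  · infer_instance

lemma lorentz_ind_upper {Y : Type*} [MeasurableSpace Y] (ν : Measure Y) (B : Set Y)
    (r : ℝ) (hr : 0 < r) (s : ℝ≥0∞) (hs : 1 ≤ s) (hsfin : s ≠ ∞) :
    lorentzNorm ν r s (B.indicator fun _ => (1:ℂ)) ≤ s * (ν B) ^ (1/r) := by
  set s' := s.toReal with hs'
  have hs1 : 1 ≤ s' := by
    have := ENNReal.toReal_mono hsfin hs
    simpa using this
  have hs'pos : 0 < s' := lt_of_lt_of_le one_pos hs1
  set C : ℝ≥0∞ := (ν B) ^ ((1/r) * s') with hC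
  have key : ∀ lam : ℝ,
      (ENNReal.ofReal lam * (distribFn ν (B.indicator fun _ => (1:ℂ)) lam) ^ (1/r)) ^ s' /
        ENNReal.ofReal lam ≤ (Set.Ioo (0:ℝ) 1).indicator (fun _ => C) lam := by
    intro lam
    rcases le_or_gt lam 0 with h0 | h0
    · rw [ENNReal.ofReal_eq_zero.mpr h0]
      simp [ENNReal.zero_rpow_of_pos hs'pos]
    rcases lt_or_ge lam 1 with h1 | h1
    · rw [Set.indicator_of_mem (by exact ⟨h0, h1⟩ : lam ∈ Set.Ioo (0:ℝ) 1)]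
      rw [distrib_ind_lt ν B h0 h1]
      have hlam0 : ENNReal.ofReal lam ≠ 0 := by simp [h0, h0.not_ge]
      have hlam1 : ENNReal.ofReal lam ≤ 1 := by
        rw [← ENNReal.ofReal_one]; exact ENNReal.ofReal_le_ofReal h1.le
      calc (ENNReal.ofReal lam * (ν B) ^ (1/r)) ^ s' / ENNReal.ofReal lam
          = (ENNReal.ofReal lam) ^ s' * C / ENNReal.ofReal lam := by
            rw [ENNReal.mul_rpow_of_nonneg _ _ hs'pos.le, hC, ENNReal.rpow_mul]
        _ ≤ ENNReal.ofReal lam * C / ENNReal.ofReal lam := by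
            gcongr
            calc (ENNReal.ofReal lam) ^ s' ≤ (ENNReal.ofReal lam) ^ (1:ℝ) :=
                  ENNReal.rpow_le_rpow_of_exponent_ge hlam1 hs1
              _ = ENNReal.ofReal lam := ENNReal.rpow_one _
        _ = C := by
            rw [mul_comm, mul_div_assoc, ENNReal.div_self hlam0 ENNReal.ofReal_ne_top,
              mul_one]
    · rw [distrib_ind_ge ν B h1]
      rw [ENNReal.zero_rpow_of_pos (by positivity : (0:ℝ) < 1/r)]
      simp [ENNReal.zero_rpow_of_pos hs'pos]
  have hint : (∫⁻ lam in Set.Ioi (0:ℝ),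
      (ENNReal.ofReal lam * (distribFn ν (B.indicator fun _ => (1:ℂ)) lam) ^ (1/r)) ^ s' /
        ENNReal.ofReal lam) ≤ C := by
    calc _ ≤ ∫⁻ lam in Set.Ioi (0:ℝ), (Set.Ioo (0:ℝ) 1).indicator (fun _ => C) lam :=
          lintegral_mono fun lam => key lam
      _ = C * (volume.restrict (Set.Ioi (0:ℝ))) (Set.Ioo (0:ℝ) 1) := by
          rw [lintegral_indicator measurableSet_Ioo, setLIntegral_const]
      _ = C := by
          rw [Measure.restrict_apply measurableSet_Ioo,
            Set.inter_eq_left.mpr Set.Ioo_subset_Ioi_self, Real.volume_Ioo]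
          simp
  unfold lorentzNorm
  rw [if_neg hsfin]
  calc (s * _) ^ (1/s') ≤ (s * C) ^ (1/s') := by gcongr
    _ = s ^ (1/s') * C ^ (1/s') := ENNReal.mul_rpow_of_nonneg _ _ (by positivity)
    _ ≤ s * (ν B) ^ (1/r) := by
        gcongr
        · calc s ^ (1/s') ≤ s ^ (1:ℝ) :=
              ENNReal.rpow_le_rpow_of_exponent_le hs (by
                rw [div_le_one hs'pos]; exact hs1)
            _ = s := ENNReal.rpow_one _
        · rw [hC, ← ENNReal.rpow_mul]
          apply le_of_eq
          congr 1
          field_simp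

lemma lorentz_ind_lower {X : Type*} [MeasurableSpace X] (μ : Measure X) (A : Set X)
    (p : ℝ) (hp : 0 < p) (q : ℝ≥0∞) (hq : 1 ≤ q) :
    (4:ℝ≥0∞)⁻¹ * (μ A) ^ (1/p) ≤ lorentzNorm μ p q (A.indicator fun _ => (1:ℂ)) := by
  have h2 : ENNReal.ofReal (1/2 : ℝ) = 2⁻¹ := by
    rw [ENNReal.ofReal_div_of_pos (by norm_num), ENNReal.ofReal_one,
      ENNReal.ofReal_ofNat, one_div]
  have h4 : ((2:ℝ≥0∞)⁻¹) ^ (2:ℝ) = 4⁻¹ := by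
    rw [show ((2:ℝ)) = ((2:ℕ):ℝ) by norm_num, ENNReal.rpow_natCast]
    rw [← ENNReal.inv_pow]
    norm_num
  have h2le1 : (2:ℝ≥0∞)⁻¹ ≤ 1 := by
    simp [ENNReal.inv_le_one]
  unfold lorentzNorm
  by_cases hqfin : q = ∞
  · rw [if_pos hqfin]
    refine le_trans ?_ (le_iSup₂_of_le (1/2 : ℝ) (by norm_num) le_rfl)
    rw [distrib_ind_lt μ A (by norm_num) (by norm_num), h2]
    gcongr
    norm_num
  · rw [if_neg hqfin]
    set q' := q.toReal with hq'def
    have hq1 : 1 ≤ q' := by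
      have := ENNReal.toReal_mono hqfin hq; simpa using this
    have hq'pos : 0 < q' := lt_of_lt_of_le one_pos hq1
    set const : ℝ≥0∞ := 2⁻¹ ^ q' * (μ A) ^ ((1/p) * q') with hconst
    have key : ∀ lam : ℝ, (Set.Ioo (1/2:ℝ) 1).indicator (fun _ => const) lam ≤
        (ENNReal.ofReal lam * (distribFn μ (A.indicator fun _ => (1:ℂ)) lam) ^ (1/p)) ^ q' /
          ENNReal.ofReal lam := by
      intro lam
      by_cases hmem : lam ∈ Set.Ioo (1/2:ℝ) 1
      · rw [Set.indicator_of_mem hmem]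
        obtain ⟨hl, hu⟩ := hmem
        rw [distrib_ind_lt μ A (lt_trans (by norm_num) hl) hu]
        have hlam1 : ENNReal.ofReal lam ≤ 1 := by
          rw [← ENNReal.ofReal_one]; exact ENNReal.ofReal_le_ofReal hu.le
        calc const = const / 1 := (div_one _).symm
          _ ≤ (ENNReal.ofReal lam * (μ A) ^ (1/p)) ^ q' / ENNReal.ofReal lam := by
              apply ENNReal.div_le_div _ hlam1
              rw [hconst, ENNReal.mul_rpow_of_nonneg _ _ hq'pos.le, ENNReal.rpow_mul]
              gcongr
              rw [← h2]
              exact ENNReal.ofReal_le_ofReal hl.le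
      · rw [Set.indicator_of_notMem hmem]
        exact zero_le
    have hint : const * 2⁻¹ ≤ ∫⁻ lam in Set.Ioi (0:ℝ),
        (ENNReal.ofReal lam * (distribFn μ (A.indicator fun _ => (1:ℂ)) lam) ^ (1/p)) ^ q' /
          ENNReal.ofReal lam := by
      calc const * 2⁻¹
          = const * (volume.restrict (Set.Ioi (0:ℝ))) (Set.Ioo (1/2:ℝ) 1) := by
            have hsub : Set.Ioo (1/2:ℝ) 1 ⊆ Set.Ioi 0 := fun x hx =>
              lt_trans (by norm_num) hx.1
            rw [Measure.restrict_apply measurableSet_Ioo,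
              Set.inter_eq_left.mpr hsub,
              Real.volume_Ioo, show (1:ℝ) - 1/2 = 1/2 by norm_num, h2]
        _ = ∫⁻ lam in Set.Ioi (0:ℝ), (Set.Ioo (1/2:ℝ) 1).indicator (fun _ => const) lam := by
            rw [lintegral_indicator measurableSet_Ioo, setLIntegral_const]
        _ ≤ _ := lintegral_mono fun lam => key lam
    have e1 : const * 2⁻¹ = 2⁻¹ ^ (q' + 1) * (μ A) ^ ((1/p) * q') := by
      rw [hconst, mul_right_comm, ENNReal.rpow_add _ _ (by norm_num) (by norm_num),
        ENNReal.rpow_one]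
    have e2 : (const * 2⁻¹) ^ (1/q') = 2⁻¹ ^ ((q'+1) * (1/q')) * (μ A) ^ (1/p) := by
      rw [e1, ENNReal.mul_rpow_of_nonneg _ _ (by positivity : (0:ℝ) ≤ 1/q'),
        ← ENNReal.rpow_mul, ← ENNReal.rpow_mul]
      congr 2
      field_simp
    calc (4:ℝ≥0∞)⁻¹ * (μ A) ^ (1/p)
        ≤ (2:ℝ≥0∞)⁻¹ ^ ((q' + 1) * (1/q')) * (μ A) ^ (1/p) := by
          gcongr
          rw [← h4]
          apply ENNReal.rpow_le_rpow_of_exponent_ge h2le1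
          rw [mul_one_div, div_le_iff₀ hq'pos]
          linarith
      _ = (const * 2⁻¹) ^ (1/q') := e2.symm
      _ ≤ (q * ∫⁻ lam in Set.Ioi (0:ℝ),
            (ENNReal.ofReal lam * (distribFn μ (A.indicator fun _ => (1:ℂ)) lam) ^ (1/p)) ^ q' /
              ENNReal.ofReal lam) ^ (1/q') := by
          refine ENNReal.rpow_le_rpow ?_ (by positivity)
          calc const * 2⁻¹ = 1 * (const * 2⁻¹) := (one_mul _).symm
            _ ≤ q * _ := mul_le_mul' hq hint

lemma lorentz_ind_upper_top {Y : Type*} [MeasurableSpace Y] (ν : Measure Y) (B : Set Y)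
    (r : ℝ) (hr : 0 < r) :
    lorentzNorm ν r ∞ (B.indicator fun _ => (1:ℂ)) ≤ (ν B) ^ (1/r) := by
  unfold lorentzNorm
  rw [if_pos rfl]
  refine iSup₂_le fun lam hlam => ?_
  rcases lt_or_ge lam 1 with h1 | h1
  · rw [distrib_ind_lt ν B hlam h1]
    calc ENNReal.ofReal lam * (ν B) ^ (1/r) ≤ 1 * (ν B) ^ (1/r) := by
          gcongr
          rw [← ENNReal.ofReal_one]
          exact ENNReal.ofReal_le_ofReal h1.le
      _ = _ := one_mul _
  · rw [distrib_ind_ge ν B h1, ENNReal.zero_rpow_of_pos (by positivity), mul_zero]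
    exact zero_le

/-- If `J_{φ⁻¹} ≥ c > 0` a.e., there exist measurable sets of arbitrarily
small positive measure, and `φ` induces a bounded composition operator
`C_φ : L_{r,s}(Y) → L_{p,q}(X)`, then `p ≤ r`. -/
theorem le_of_boundedCompositionOperator
    {X Y : Type*} [MeasurableSpace X] [MeasurableSpace Y]
    (μ : Measure X) (ν : Measure Y) [SigmaFinite μ] [SigmaFinite ν]
    (φ : X → Y) (hφ : Measurable φ)
    (hN : ∀ S : Set Y, MeasurableSet S → ν S = 0 → μ (φ ⁻¹' S) = 0)
    (J : Y → ℝ≥0∞) (hJmeas : Measurable J)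
    (hJ : ∀ E : Set Y, MeasurableSet E → μ (φ ⁻¹' E) = ∫⁻ y in E, J y ∂ν)
    (c : ℝ≥0) (hc : 0 < c) (hcJ : ∀ᵐ y ∂ν, (c : ℝ≥0∞) ≤ J y)
    (hsmall : ∀ ε : ℝ≥0∞, 0 < ε → ∃ B : Set Y, MeasurableSet B ∧ 0 < ν B ∧ ν B < ε)
    (p r : ℝ) (hp : 1 < p) (hr : 1 < r)
    (s q : ℝ≥0∞) (hs : 1 ≤ s) (hsq : s ≤ q)
    (hbdd : ∃ K : ℝ≥0, (∀ f : Y → ℂ, MemLorentz ν r s f → MemLorentz μ p q (f ∘ φ)) ∧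
        ∀ f : Y → ℂ, MemLorentz ν r s f →
          lorentzNorm μ p q (f ∘ φ) ≤ (K : ℝ≥0∞) * lorentzNorm ν r s f) :
    p ≤ r := by
  by_contra hcon
  push_neg at hcon
  obtain ⟨K, _, hK⟩ := hbdd
  have hp0 : (0:ℝ) < p := lt_trans one_pos hp
  have hr0 : (0:ℝ) < r := lt_trans one_pos hr
  set δ : ℝ := 1/r - 1/p with hδdef
  have hδ : 0 < δ := by
    have h1 : 1/p < 1/r := one_div_lt_one_div_of_lt hr0 hcon
    rw [hδdef]
    linarith
  have hq1 : 1 ≤ q := le_trans hs hsq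
  set D : ℝ≥0∞ := if s = ∞ then 1 else s with hD
  have hDtop : D ≠ ∞ := by
    rw [hD]; split_ifs with h
    · exact one_ne_top
    · exact h
  set A0 : ℝ≥0∞ := 4⁻¹ * (c : ℝ≥0∞) ^ (1/p) with hA0
  have hc0 : (c : ℝ≥0∞) ≠ 0 := by simpa using hc.ne'
  have hA0pos : 0 < A0 := by
    rw [hA0]
    exact ENNReal.mul_pos (by norm_num) (ENNReal.rpow_pos (by positivity) coe_ne_top).ne'
  have hA0top : A0 ≠ ∞ := by
    rw [hA0]
    exact mul_ne_top (by norm_num) (ENNReal.rpow_ne_top_of_nonneg (by positivity) coe_ne_top)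
  set E : ℝ≥0∞ := (K : ℝ≥0∞) * D with hE
  have hEtop : E ≠ ∞ := mul_ne_top coe_ne_top hDtop
  -- main inequality for small sets
  have main : ∀ B : Set Y, MeasurableSet B → 0 < ν B → ν B < 1 →
      A0 ≤ E * (ν B) ^ δ := by
    intro B hB hB0 hB1
    set t := ν B with ht
    have ht0 : t ≠ 0 := hB0.ne'
    have httop : t ≠ ∞ := (lt_trans hB1 one_lt_top).ne
    set f : Y → ℂ := B.indicator fun _ => (1:ℂ) with hf
    have hfmeas : Measurable f := (measurable_const).indicator hB
    -- upper bound for the (r,s) norm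
    have hUB : lorentzNorm ν r s f ≤ D * t ^ (1/r) := by
      rw [hD]
      split_ifs with hsinf
      · rw [hsinf, one_mul]
        exact lorentz_ind_upper_top ν B r hr0
      · exact lorentz_ind_upper ν B r hr0 s hs hsinf
    have hMem : MemLorentz ν r s f := by
      refine ⟨hfmeas, lt_of_le_of_lt hUB ?_⟩
      exact mul_lt_top hDtop.lt_top
        (ENNReal.rpow_ne_top_of_nonneg (by positivity) httop).lt_top
    -- composition is the indicator of the preimage
    have hcomp : f ∘ φ = (φ ⁻¹' B).indicator fun _ => (1:ℂ) := by
      funext x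
      by_cases hx : φ x ∈ B <;>
        simp [hf, Function.comp, Set.indicator_apply, Set.mem_preimage, hx]
    -- lower bound on the measure of the preimage
    have hm : (c : ℝ≥0∞) * t ≤ μ (φ ⁻¹' B) := by
      rw [hJ B hB]
      calc (c : ℝ≥0∞) * t = ∫⁻ _ in B, (c : ℝ≥0∞) ∂ν := (setLIntegral_const B _).symm
        _ ≤ ∫⁻ y in B, J y ∂ν := lintegral_mono_ae (ae_restrict_of_ae hcJ)
    -- chain of inequalities
    have chain : A0 * t ^ (1/p) ≤ E * t ^ (1/r) := by
      calc A0 * t ^ (1/p) = 4⁻¹ * ((c : ℝ≥0∞) * t) ^ (1/p) := by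
            rw [hA0, ENNReal.mul_rpow_of_nonneg _ _ (by positivity : (0:ℝ) ≤ 1/p), mul_assoc]
        _ ≤ 4⁻¹ * (μ (φ ⁻¹' B)) ^ (1/p) := by gcongr
        _ ≤ lorentzNorm μ p q (f ∘ φ) := by
            rw [hcomp]
            exact lorentz_ind_lower μ (φ ⁻¹' B) p hp0 q hq1
        _ ≤ (K : ℝ≥0∞) * lorentzNorm ν r s f := hK f hMem
        _ ≤ (K : ℝ≥0∞) * (D * t ^ (1/r)) := by gcongr
        _ = E * t ^ (1/r) := by rw [hE, mul_assoc]
    have hsplit : t ^ (1/r) = t ^ δ * t ^ (1/p) := by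
      rw [← ENNReal.rpow_add _ _ ht0 httop]
      congr 1
      rw [hδdef]; ring
    rw [hsplit, ← mul_assoc] at chain
    exact (ENNReal.mul_le_mul_iff_left
      (by exact (ENNReal.rpow_pos hB0 httop).ne')
      (ENNReal.rpow_ne_top_of_nonneg (by positivity) httop)).mp chain
  -- derive the contradiction
  by_cases hE0 : E = 0
  · obtain ⟨B, hB, hB0, hB1⟩ := hsmall 1 one_pos
    have := main B hB hB0 hB1
    rw [hE0, zero_mul] at this
    exact absurd this (by simpa using hA0pos.ne')
  · have hdivtop : A0 / E ≠ ∞ := (ENNReal.div_lt_top hA0top hE0).ne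
    have hdivpos : 0 < A0 / E := ENNReal.div_pos hA0pos.ne' hEtop
    set ε : ℝ≥0∞ := min ((A0 / E) ^ (1/δ)) 1 with hε
    have hεpos : 0 < ε :=
      lt_min (ENNReal.rpow_pos hdivpos hdivtop) one_pos
    obtain ⟨B, hB, hB0, hB1⟩ := hsmall ε hεpos
    have hB1' : ν B < 1 := lt_of_lt_of_le hB1 (min_le_right _ _)
    have hmain := main B hB hB0 hB1'
    have htδ : (ν B) ^ δ < A0 / E := by
      calc (ν B) ^ δ < ((A0 / E) ^ (1/δ)) ^ δ :=
            ENNReal.rpow_lt_rpow (lt_of_lt_of_le hB1 (min_le_left _ _)) hδ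
        _ = A0 / E := by
            rw [← ENNReal.rpow_mul, one_div, inv_mul_cancel₀ hδ.ne', ENNReal.rpow_one]
    have : E * (ν B) ^ δ < A0 := ENNReal.mul_lt_of_lt_div' htδ
    exact absurd hmain this.not_ge
end

section
/- Let φ : X → Y be a measurable mapping between σ-finite measure spaces, 1 < p, r < ∞, 1 ≤ s ≤ q < ∞, and let C_φ : L_{r,s}(Y, 𝓑, ν) → L_{p,q}(X, 𝒜, μ) be a bounded composition operator. Then the image C_φ(L_{r,s}(Y, 𝓑, ν)) is dense in L_{p,q}(X, φ⁻¹(𝓑), μ), the Lorentz space of functions on X measurable with respect to the σ-algebra φ⁻¹(𝓑) = {φ⁻¹(B) : B ∈ 𝓑}. -/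
open MeasureTheory Set ENNReal NNReal

open Filter Topology

/-- Factor a simple function measurable w.r.t. `comap φ` through `φ`. -/
theorem simpleFactor {X Y : Type*} [mY : MeasurableSpace Y] (φ : X → Y)
    (f : @SimpleFunc X (mY.comap φ) ℂ) :
    ∃ g : Y → ℂ, Measurable g ∧ ∀ x, g (φ x) = f x := by
  apply @SimpleFunc.induction X ℂ (mY.comap φ) _
    (fun f => ∃ g : Y → ℂ, Measurable g ∧ ∀ x, g (φ x) = f x)
  · intro c t ht
    have ht' := ht
    obtain ⟨B, hB, hBt⟩ := ht'
    refine ⟨B.indicator fun _ => c, (measurable_const).indicator hB, fun x => ?_⟩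
    rw [@SimpleFunc.piecewise_apply X ℂ (mY.comap φ), ← hBt]
    by_cases hx : φ x ∈ B <;> simp [Set.indicator_apply, hx, Set.mem_preimage]
  · rintro f₁ f₂ - ⟨g₁, hg₁, hfg₁⟩ ⟨g₂, hg₂, hfg₂⟩
    exact ⟨g₁ + g₂, hg₁.add hg₂, fun x => by simp [hfg₁ x, hfg₂ x]⟩

/-- Doob–Dynkin factorization for `ℂ`-valued functions. -/
theorem doobDynkin {X Y : Type*} [mY : MeasurableSpace Y] (φ : X → Y)
    (h : X → ℂ) (hh : Measurable[mY.comap φ] h) :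
    ∃ g : Y → ℂ, Measurable g ∧ ∀ x, g (φ x) = h x := by
  classical
  letI mx : MeasurableSpace X := mY.comap φ
  have hsm : StronglyMeasurable h := hh.stronglyMeasurable
  choose g hg hgφ using fun n => simpleFactor φ (hsm.approx n)
  set S : Set Y := {y | ∃ c, Tendsto (fun n => g n y) atTop (𝓝 c)} with hS
  have hSm : MeasurableSet S := measurableSet_exists_tendsto (l := atTop) hg
  set G : ℕ → Y → ℂ := fun n => S.indicator (g n) with hG
  have hGm : ∀ n, Measurable (G n) := fun n => (hg n).indicator hSm
  have hGtend : ∀ y, Tendsto (fun n => G n y) atTop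
      (𝓝 (if hy : y ∈ S then hy.choose else 0)) := by
    intro y
    by_cases hy : y ∈ S
    · simpa [hG, hy, Set.indicator_of_mem, dif_pos hy] using
        (show Tendsto (fun n => g n y) atTop (𝓝 hy.choose) from hy.choose_spec)
    · simpa [hG, hy, dif_neg hy] using tendsto_const_nhds (x := (0 : ℂ))
  set gl : Y → ℂ := fun y => if hy : y ∈ S then hy.choose else 0 with hgl
  have hglm : Measurable gl := measurable_of_tendsto_metrizable hGm (tendsto_pi_nhds.2 hGtend)
  refine ⟨gl, hglm, fun x => ?_⟩
  have hxS : φ x ∈ S := ⟨h x, by simpa [funext fun n => hgφ n x] using hsm.tendsto_approx x⟩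
  have := (hGtend (φ x))
  rw [dif_pos hxS] at this
  have hgle : gl (φ x) = hxS.choose := dif_pos hxS
  rw [hgle]
  have h2 : Tendsto (fun n => G n (φ x)) atTop (𝓝 (h x)) := by
    have : ∀ n, G n (φ x) = (hsm.approx n) x := fun n => by
      simp [hG, Set.indicator_of_mem hxS, hgφ n x]
    simpa [this] using hsm.tendsto_approx x
  exact tendsto_nhds_unique this h2

theorem distribFn_antitone {X : Type*} [MeasurableSpace X] (μ : Measure X) (f : X → ℂ) :
    Antitone (distribFn μ f) := fun a b hab =>
  measure_mono fun x hx => lt_of_le_of_lt hab hx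

/-- Lemma B: finite Lorentz norm implies finite distribution function. -/
theorem distribFn_lt_top {X : Type*} [MeasurableSpace X] (μ : Measure X)
    (p : ℝ) (hp : 1 < p) (q : ℝ≥0∞) (hq1 : 1 ≤ q) (hq : q ≠ ∞) (h : X → ℂ)
    (hnorm : lorentzNorm μ p q h < ∞) {lam : ℝ} (hlam : 0 < lam) :
    distribFn μ h lam < ∞ := by
  have hq0 : q ≠ 0 := (lt_of_lt_of_le one_pos hq1).ne'
  have hqt : (1 : ℝ) ≤ q.toReal := by
    simpa using ENNReal.toReal_mono hq hq1
  have hqt0 : (0 : ℝ) < q.toReal := lt_of_lt_of_le one_pos hqt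
  by_contra hcon
  have hd : distribFn μ h lam = ∞ := by simpa [lt_top_iff_ne_top, not_not] using hcon
  rw [lorentzNorm, if_neg hq] at hnorm
  have hIoc : ∀ t ∈ Set.Ioc (0 : ℝ) lam,
      (ENNReal.ofReal t * (distribFn μ h t) ^ (1 / p)) ^ q.toReal /
        ENNReal.ofReal t = ∞ := by
    intro t ht
    have hdt : distribFn μ h t = ∞ :=
      eq_top_mono (hd ▸ distribFn_antitone μ h ht.2) rfl
    have ht0 : ENNReal.ofReal t ≠ 0 := (ENNReal.ofReal_pos.2 ht.1).ne'
    rw [hdt, ENNReal.top_rpow_of_pos (by positivity), ENNReal.mul_top ht0,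
      ENNReal.top_rpow_of_pos hqt0, ENNReal.top_div_of_ne_top ENNReal.ofReal_ne_top]
  have hI : (∫⁻ t in Set.Ioi (0 : ℝ),
      (ENNReal.ofReal t * (distribFn μ h t) ^ (1 / p)) ^ q.toReal /
        ENNReal.ofReal t) = ∞ := by
    refine eq_top_mono ?_ rfl
    calc (∞ : ℝ≥0∞) = ∫⁻ _ in Set.Ioc (0 : ℝ) lam, ∞ := by
          rw [setLIntegral_const, Real.volume_Ioc,
            ENNReal.top_mul (by simp [hlam] : ENNReal.ofReal (lam - 0) ≠ 0)]
      _ = ∫⁻ t in Set.Ioc (0 : ℝ) lam,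
            (ENNReal.ofReal t * (distribFn μ h t) ^ (1 / p)) ^ q.toReal /
              ENNReal.ofReal t := by
          refine (setLIntegral_congr_fun measurableSet_Ioc ?_).symm
          exact hIoc
      _ ≤ _ := lintegral_mono_set Set.Ioc_subset_Ioi_self
  rw [hI, ENNReal.mul_top hq0, ENNReal.top_rpow_of_pos (by positivity)] at hnorm
  exact absurd hnorm (by simp)

/-- Lemma C: a bounded function supported on a finite-measure set has finite Lorentz norm. -/
theorem lorentzNorm_lt_top_of_bdd {Y : Type*} [MeasurableSpace Y] (ν : Measure Y)
    (r : ℝ) (hr : 1 < r) (s : ℝ≥0∞) (hs1 : 1 ≤ s) (hs : s ≠ ∞)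
    (f : Y → ℂ) (B : Set Y) (hB : ν B ≠ ∞) (n : ℝ) (hn : 0 < n)
    (hbound : ∀ y, ‖f y‖ ≤ n) (hsupp : ∀ y ∉ B, f y = 0) :
    lorentzNorm ν r s f < ∞ := by
  have hs0 : s ≠ 0 := (lt_of_lt_of_le one_pos hs1).ne'
  have hst : (1 : ℝ) ≤ s.toReal := by simpa using ENNReal.toReal_mono hs hs1
  have hst0 : (0 : ℝ) < s.toReal := lt_of_lt_of_le one_pos hst
  rw [lorentzNorm, if_neg hs]
  set C : ℝ≥0∞ := ENNReal.ofReal n ^ (s.toReal - 1) * (ν B) ^ (s.toReal * (1 / r)) with hC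
  have hCfin : C ≠ ∞ := by
    refine ENNReal.mul_ne_top ?_ ?_
    · exact (ENNReal.rpow_lt_top_of_nonneg (by linarith) ENNReal.ofReal_ne_top).ne
    · exact (ENNReal.rpow_lt_top_of_nonneg (by positivity) hB).ne
  have hbd : ∀ t : ℝ,
      (ENNReal.ofReal t * (distribFn ν f t) ^ (1 / r)) ^ s.toReal / ENNReal.ofReal t
        ≤ (Set.Ioc (0 : ℝ) n).indicator (fun _ => C) t := by
    intro t
    rcases le_or_gt t 0 with ht | ht
    · have : ENNReal.ofReal t = 0 := ENNReal.ofReal_eq_zero.2 ht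
      simp [this, ENNReal.zero_rpow_of_pos hst0]
    rcases le_or_gt t n with htn | htn
    · have hsub : distribFn ν f t ≤ ν B := by
        refine measure_mono fun y hy => ?_
        by_contra hyB
        simp only [Set.mem_setOf_eq, hsupp y hyB, norm_zero] at hy
        exact absurd hy (not_lt.2 ht.le)
      have ht0 : ENNReal.ofReal t ≠ 0 := (ENNReal.ofReal_pos.2 ht).ne'
      rw [Set.indicator_of_mem (show t ∈ Set.Ioc (0:ℝ) n from ⟨ht, htn⟩)]
      calc (ENNReal.ofReal t * (distribFn ν f t) ^ (1 / r)) ^ s.toReal / ENNReal.ofReal t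
          ≤ (ENNReal.ofReal t * (ν B) ^ (1 / r)) ^ s.toReal / ENNReal.ofReal t := by
            gcongr
        _ = (ENNReal.ofReal t ^ s.toReal * ((ν B) ^ (1 / r)) ^ s.toReal) / ENNReal.ofReal t := by
            rw [ENNReal.mul_rpow_of_nonneg _ _ hst0.le]
        _ = (ENNReal.ofReal t ^ s.toReal / ENNReal.ofReal t) * ((ν B) ^ (1 / r)) ^ s.toReal := by
            rw [ENNReal.div_eq_inv_mul, ENNReal.div_eq_inv_mul]; ring
        _ = ENNReal.ofReal t ^ (s.toReal - 1) * (ν B) ^ (s.toReal * (1 / r)) := by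
            rw [ENNReal.rpow_sub _ _ ht0 ENNReal.ofReal_ne_top, ENNReal.rpow_one,
              ← ENNReal.rpow_mul, mul_comm (1 / r)]
        _ ≤ C := by
            rw [hC]
            exact mul_le_mul_left
              (ENNReal.rpow_le_rpow (ENNReal.ofReal_le_ofReal htn) (by linarith)) _
    · have hdz : distribFn ν f t = 0 := by
        rw [distribFn]
        convert measure_empty
        · ext y
          simp only [Set.mem_setOf_eq, Set.mem_empty_iff_false, iff_false, not_lt]
          exact (hbound y).trans (le_of_lt htn)
        · infer_instance
      rw [hdz, ENNReal.zero_rpow_of_pos (by positivity), mul_zero,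
        ENNReal.zero_rpow_of_pos hst0, ENNReal.zero_div]
      exact zero_le
  have hIle : (∫⁻ t in Set.Ioi (0 : ℝ),
      (ENNReal.ofReal t * (distribFn ν f t) ^ (1 / r)) ^ s.toReal / ENNReal.ofReal t)
        ≤ C * ENNReal.ofReal n := by
    calc _ ≤ ∫⁻ t in Set.Ioi (0 : ℝ), (Set.Ioc (0 : ℝ) n).indicator (fun _ => C) t :=
          lintegral_mono hbd
      _ ≤ ∫⁻ t, (Set.Ioc (0 : ℝ) n).indicator (fun _ => C) t := setLIntegral_le_lintegral _ _
      _ = C * volume (Set.Ioc (0 : ℝ) n) := by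
          rw [lintegral_indicator measurableSet_Ioc, setLIntegral_const]
      _ = C * ENNReal.ofReal n := by rw [Real.volume_Ioc, sub_zero]
  have hIfin : (s * ∫⁻ t in Set.Ioi (0 : ℝ),
      (ENNReal.ofReal t * (distribFn ν f t) ^ (1 / r)) ^ s.toReal / ENNReal.ofReal t) ≠ ∞ :=
    ENNReal.mul_ne_top hs (lt_of_le_of_lt hIle
      (ENNReal.mul_lt_top (lt_top_iff_ne_top.2 hCfin) ENNReal.ofReal_lt_top)).ne
  exact ENNReal.rpow_lt_top_of_nonneg (by positivity) hIfin

/-- The image of a bounded composition operator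
`C_φ : L_{r,s}(Y, 𝓑, ν) → L_{p,q}(X, 𝒜, μ)` is dense in `L_{p,q}(X, φ⁻¹(𝓑), μ)`,
the Lorentz space of functions measurable w.r.t. the σ-algebra `φ⁻¹(𝓑)`. -/
theorem denseImage_compositionOperator
    {X Y : Type*} [mX : MeasurableSpace X] [mY : MeasurableSpace Y]
    (μ : Measure X) (ν : Measure Y) [SigmaFinite μ] [SigmaFinite ν]
    (φ : X → Y) (hφ : Measurable φ)
    (p r : ℝ) (hp : 1 < p) (hr : 1 < r)
    (s q : ℝ≥0∞) (hs : 1 ≤ s) (hsq : s ≤ q) (hq : q ≠ ∞)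
    (K : ℝ≥0)
    (hcomp : ∀ f : Y → ℂ, MemLorentz ν r s f → MemLorentz μ p q (f ∘ φ))
    (hK : ∀ f : Y → ℂ, MemLorentz ν r s f →
      lorentzNorm μ p q (f ∘ φ) ≤ (K : ℝ≥0∞) * lorentzNorm ν r s f) :
    ∀ h : X → ℂ, Measurable[mY.comap φ] h → lorentzNorm μ p q h < ∞ →
      ∀ ε : ℝ≥0∞, 0 < ε → ∃ f : Y → ℂ, MemLorentz ν r s f ∧
        lorentzNorm μ p q (fun x => h x - f (φ x)) < ε := by
  intro h hmeas hnorm ε hε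
  classical
  have hq1 : 1 ≤ q := hs.trans hsq
  have hq0 : q ≠ 0 := (lt_of_lt_of_le one_pos hq1).ne'
  have hqt : (1 : ℝ) ≤ q.toReal := by simpa using ENNReal.toReal_mono hq hq1
  have hqt0 : (0 : ℝ) < q.toReal := lt_of_lt_of_le one_pos hqt
  have hsne : s ≠ ∞ := (lt_of_le_of_lt hsq (lt_top_iff_ne_top.2 hq)).ne
  obtain ⟨g, hgm, hgφ⟩ := doobDynkin φ h hmeas
  have hhm : Measurable h := by
    have : h = fun x => g (φ x) := funext fun x => (hgφ x).symm
    rw [this]; exact hgm.comp hφ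
  set S : ℕ → Set Y := fun n => spanningSets ν n ∩ {y | ‖g y‖ ≤ n} with hSdef
  have hSm : ∀ n, MeasurableSet (S n) := fun n =>
    (measurableSet_spanningSets ν n).inter
      (measurableSet_le (continuous_norm.measurable.comp hgm) measurable_const)
  have hSmono : Monotone S := fun a b hab =>
    Set.inter_subset_inter (monotone_spanningSets ν hab)
      (fun y hy => show ‖g y‖ ≤ (b : ℝ) from
        le_trans hy (Nat.cast_le.2 hab))
  have hScover : ∀ y, ∃ n, y ∈ S n := by
    intro y
    have hy : y ∈ ⋃ i, spanningSets ν i := by rw [iUnion_spanningSets]; trivial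
    obtain ⟨a, ha⟩ := Set.mem_iUnion.1 hy
    obtain ⟨b, hb⟩ := exists_nat_ge ‖g y‖
    exact ⟨max a b, monotone_spanningSets ν (le_max_left a b) ha,
      le_trans hb (Nat.cast_le.2 (le_max_right a b))⟩
  set f : ℕ → Y → ℂ := fun n => (S n).indicator g with hfdef
  have hfm : ∀ n, Measurable (f n) := fun n => hgm.indicator (hSm n)
  have hfLor : ∀ n, MemLorentz ν r s (f n) := by
    intro n
    refine ⟨hfm n, lorentzNorm_lt_top_of_bdd ν r hr s hs hsne (f n) (spanningSets ν n)
      (measure_spanningSets_lt_top ν n).ne ((n : ℝ) + 1) (by positivity) ?_ ?_⟩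
    · intro y
      by_cases hy : y ∈ S n
      · rw [hfdef]; simp only [Set.indicator_of_mem hy]
        exact le_trans hy.2 (by linarith)
      · rw [hfdef]; simp only [Set.indicator_of_notMem hy, norm_zero]; positivity
    · intro y hy
      exact Set.indicator_of_notMem (fun hyS => hy hyS.1) g
  have hdiff : ∀ n x, h x - f n (φ x) = if φ x ∈ S n then 0 else h x := by
    intro n x
    by_cases hx : φ x ∈ S n
    · simp [hfdef, Set.indicator_of_mem hx, ← hgφ x, hx]
    · simp [hfdef, Set.indicator_of_notMem hx, hx]
  set D : ℕ → ℝ → ℝ≥0∞ := fun n => distribFn μ (fun x => h x - f n (φ x)) with hDdef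
  have hDset : ∀ n, ∀ t : ℝ, 0 < t →
      {x | t < ‖h x - f n (φ x)‖}
        = (φ ⁻¹' (S n))ᶜ ∩ {x | t < ‖h x‖} := by
    intro n t ht
    ext x
    simp only [Set.mem_setOf_eq, Set.mem_inter_iff, Set.mem_compl_iff, Set.mem_preimage]
    rw [hdiff n x]
    by_cases hx : φ x ∈ S n <;> simp [hx, not_lt.2 ht.le]
  have hDle : ∀ n t, D n t ≤ distribFn μ h t := by
    intro n t
    refine measure_mono fun x hx => ?_
    simp only [Set.mem_setOf_eq] at hx ⊢
    rw [hdiff n x] at hx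
    by_cases h' : φ x ∈ S n
    · rw [if_pos h'] at hx
      simp only [norm_zero] at hx
      exact lt_of_lt_of_le hx (norm_nonneg _)
    · rwa [if_neg h'] at hx
  -- unfold the norm in the hypothesis
  have hnorm0 := hnorm
  rw [lorentzNorm, if_neg hq] at hnorm
  set F : ℕ → ℝ → ℝ≥0∞ := fun n t =>
    (ENNReal.ofReal t * (D n t) ^ (1 / p)) ^ q.toReal / ENNReal.ofReal t with hFdef
  set Fh : ℝ → ℝ≥0∞ := fun t =>
    (ENNReal.ofReal t * (distribFn μ h t) ^ (1 / p)) ^ q.toReal / ENNReal.ofReal t with hFhdef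
  have hIfin : (∫⁻ t in Set.Ioi (0 : ℝ), Fh t) ≠ ∞ := by
    intro hcon
    rw [hcon, ENNReal.mul_top hq0, ENNReal.top_rpow_of_pos (by positivity)] at hnorm
    exact absurd hnorm (by simp)
  have hFm : ∀ n, Measurable (F n) := by
    intro n
    have hDm : Measurable (D n) := (distribFn_antitone μ _).measurable
    exact ((ENNReal.measurable_ofReal.mul
      ((ENNReal.continuous_rpow_const.measurable).comp hDm)).pow measurable_const).div
      ENNReal.measurable_ofReal
  have hFle : ∀ n, F n ≤ᵐ[volume.restrict (Set.Ioi (0 : ℝ))] Fh := by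
    intro n
    refine ae_of_all _ fun t => ?_
    show (ENNReal.ofReal t * (D n t) ^ (1 / p)) ^ q.toReal / ENNReal.ofReal t
      ≤ (ENNReal.ofReal t * (distribFn μ h t) ^ (1 / p)) ^ q.toReal / ENNReal.ofReal t
    exact ENNReal.div_le_div (ENNReal.rpow_le_rpow
      (mul_le_mul_right (ENNReal.rpow_le_rpow (hDle n t) (by positivity)) _) hqt0.le) le_rfl
  have hDto : ∀ t : ℝ, 0 < t → Tendsto (fun n => D n t) atTop (𝓝 0) := by
    intro t ht
    set E : ℕ → Set X := fun n => (φ ⁻¹' (S n))ᶜ ∩ {x | t < ‖h x‖} with hEdef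
    have hEanti : Antitone E := fun a b hab =>
      Set.inter_subset_inter
        (Set.compl_subset_compl.2 (Set.preimage_mono (hSmono hab))) subset_rfl
    have hEmeas : ∀ n, NullMeasurableSet (E n) μ := fun n =>
      (((hφ (hSm n)).compl).inter
        (measurableSet_lt measurable_const
          (continuous_norm.measurable.comp hhm))).nullMeasurableSet
    have hEfin : ∃ n, μ (E n) ≠ ∞ :=
      ⟨0, (lt_of_le_of_lt (measure_mono Set.inter_subset_right)
        (distribFn_lt_top μ p hp q hq1 hq h hnorm0 ht)).ne⟩
    have hEempty : ⋂ n, E n = ∅ := by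
      ext x
      simp only [Set.mem_iInter, Set.mem_empty_iff_false, iff_false, not_forall]
      obtain ⟨n, hn⟩ := hScover (φ x)
      exact ⟨n, fun hx => hx.1 hn⟩
    have htend := tendsto_measure_iInter_atTop hEmeas hEanti hEfin
    rw [hEempty, measure_empty] at htend
    have : (fun n => D n t) = μ ∘ E := by
      funext n
      rw [hDdef]
      show distribFn μ (fun x => h x - f n (φ x)) t = μ (E n)
      rw [distribFn, hDset n t ht]
    rw [this]
    exact htend
  have hFto : ∀ t ∈ Set.Ioi (0 : ℝ), Tendsto (fun n => F n t) atTop (𝓝 0) := by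
    intro t ht
    have ht' : (0 : ℝ) < t := ht
    have h1 : Tendsto (fun n => (D n t) ^ (1 / p)) atTop (𝓝 0) := by
      have := (ENNReal.continuous_rpow_const (y := 1 / p)).tendsto 0
      rw [ENNReal.zero_rpow_of_pos (by positivity)] at this
      exact this.comp (hDto t ht')
    have h2 : Tendsto (fun n => ENNReal.ofReal t * (D n t) ^ (1 / p)) atTop (𝓝 0) := by
      have := ENNReal.Tendsto.const_mul h1 (Or.inr (ENNReal.ofReal_ne_top (r := t)))
      simpa using this
    have h3 : Tendsto (fun n => (ENNReal.ofReal t * (D n t) ^ (1 / p)) ^ q.toReal)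
        atTop (𝓝 0) := by
      have := (ENNReal.continuous_rpow_const (y := q.toReal)).tendsto 0
      rw [ENNReal.zero_rpow_of_pos hqt0] at this
      exact this.comp h2
    have h4 := ENNReal.Tendsto.mul_const h3
      (Or.inr (ENNReal.inv_ne_top.2 (ENNReal.ofReal_pos.2 ht').ne'))
    rw [zero_mul] at h4
    simpa [hFdef, div_eq_mul_inv] using h4
  have hlim : Tendsto (fun n => ∫⁻ t in Set.Ioi (0 : ℝ), F n t) atTop (𝓝 0) := by
    have := tendsto_lintegral_of_dominated_convergence (μ := volume.restrict (Set.Ioi (0 : ℝ)))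
      (f := fun _ => (0 : ℝ≥0∞)) Fh hFm hFle hIfin
      ((ae_restrict_iff' measurableSet_Ioi).2 (ae_of_all _ hFto))
    simpa using this
  have hqlim : Tendsto (fun n => q * ∫⁻ t in Set.Ioi (0 : ℝ), F n t) atTop (𝓝 0) := by
    have := ENNReal.Tendsto.const_mul hlim (Or.inr hq)
    simpa using this
  set δ : ℝ≥0∞ := if ε = ∞ then 1 else ε ^ q.toReal with hδdef
  have hδ0 : 0 < δ := by
    by_cases hε' : ε = ∞
    · simp [hδdef, hε']
    · rw [hδdef, if_neg hε']
      exact ENNReal.rpow_pos hε hε'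
  obtain ⟨n, hn⟩ := (hqlim.eventually_lt_const hδ0).exists
  refine ⟨f n, hfLor n, ?_⟩
  rw [lorentzNorm, if_neg hq]
  have hshow : (∫⁻ lam in Set.Ioi (0 : ℝ),
      (ENNReal.ofReal lam * (distribFn μ (fun x => h x - f n (φ x)) lam) ^ (1 / p)) ^ q.toReal /
        ENNReal.ofReal lam) = ∫⁻ t in Set.Ioi (0 : ℝ), F n t := rfl
  rw [hshow]
  by_cases hε' : ε = ∞
  · rw [hδdef, if_pos hε'] at hn
    calc (q * ∫⁻ t in Set.Ioi (0 : ℝ), F n t) ^ (1 / q.toReal)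
        ≤ (1 : ℝ≥0∞) ^ (1 / q.toReal) := ENNReal.rpow_le_rpow hn.le (by positivity)
      _ = 1 := ENNReal.one_rpow _
      _ < ∞ := ENNReal.one_lt_top
      _ = ε := hε'.symm
  · rw [hδdef, if_neg hε'] at hn
    calc (q * ∫⁻ t in Set.Ioi (0 : ℝ), F n t) ^ (1 / q.toReal)
        < (ε ^ q.toReal) ^ (1 / q.toReal) := ENNReal.rpow_lt_rpow hn (by positivity)
      _ = ε := by
          rw [← ENNReal.rpow_mul, mul_one_div_cancel hqt0.ne', ENNReal.rpow_one]
end
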